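/- arXiv:1005.2104 — 2 statements merged into one kernel-verified Lean document; each statement's English description precedes it below -/
import Mathlib

section
/- For every real k, |J⁰(k)| ≤ (1 + k²)^(-1/4). -/
open MeasureTheory Real

/-- The zeroth-order Bessel function `J⁰(k) = (1/π) ∫₀^π cos(k cos θ) dθ`. -/
noncomputable def J0 (k : ℝ) : ℝ :=
  (1 / Real.pi) * ∫ θ in (0:ℝ)..Real.pi, Real.cos (k * Real.cos θ)

/-! ### Auxiliary development -/

section Aux

open intervalIntegral

/-! #### Taylor bounds for sin and cos -/

private lemma taylor_aux {f f' : ℝ → ℝ} (hd : ∀ x, HasDerivAt f (f' x) x) (h0 : f 0 = 0)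
    (h' : ∀ x, 0 ≤ x → 0 ≤ f' x) : ∀ x, 0 ≤ x → 0 ≤ f x := by
  intro x hx
  have mono : MonotoneOn f (Set.Ici 0) := by
    refine monotoneOn_of_deriv_nonneg (convex_Ici 0) ?_ ?_ ?_
    · exact (Continuous.continuousOn
        (Differentiable.continuous (fun x => (hd x).differentiableAt)))
    · exact fun x _ => ((hd x).differentiableAt).differentiableWithinAt
    · intro x hx
      rw [(hd x).deriv]
      exact h' x (le_of_lt (by simpa using hx))
  have := mono Set.self_mem_Ici hx hx
  linarith

private lemma dpoly (n : ℕ) (c : ℝ) (x : ℝ) :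
    HasDerivAt (fun x : ℝ => x^n/c) ((n:ℝ) * x^(n-1)/c) x :=
  (hasDerivAt_pow n x).div_const c

private lemma s3 : ∀ x : ℝ, 0 ≤ x → x - x^3/6 ≤ Real.sin x := by
  have := taylor_aux (f := fun x => Real.sin x - x + x^3/6)
    (f' := fun x => Real.cos x - 1 + x^2/2)
    (fun x => by
      have h := ((Real.hasDerivAt_sin x).sub (hasDerivAt_id x)).add (dpoly 3 6 x)
      exact h.congr_deriv (by norm_num <;> ring))
    (by norm_num)
    (fun x hx => by nlinarith [Real.one_sub_sq_div_two_le_cos (x := x)])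
  intro x hx; have := this x hx; linarith

private lemma c4 : ∀ x : ℝ, 0 ≤ x → Real.cos x ≤ 1 - x^2/2 + x^4/24 := by
  have := taylor_aux (f := fun x => 1 - x^2/2 + x^4/24 - Real.cos x)
    (f' := fun x => -x + x^3/6 + Real.sin x)
    (fun x => by
      have h := (((hasDerivAt_const x (1:ℝ)).sub (dpoly 2 2 x)).add (dpoly 4 24 x)).sub
        (Real.hasDerivAt_cos x)
      exact h.congr_deriv (by norm_num <;> ring))
    (by norm_num)
    (fun x hx => by nlinarith [s3 x hx])
  intro x hx; have := this x hx; linarith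

private lemma s5 : ∀ x : ℝ, 0 ≤ x → Real.sin x ≤ x - x^3/6 + x^5/120 := by
  have := taylor_aux (f := fun x => x - x^3/6 + x^5/120 - Real.sin x)
    (f' := fun x => 1 - x^2/2 + x^4/24 - Real.cos x)
    (fun x => by
      have h := (((hasDerivAt_id x).sub (dpoly 3 6 x)).add (dpoly 5 120 x)).sub
        (Real.hasDerivAt_sin x)
      exact h.congr_deriv (by norm_num <;> ring))
    (by norm_num)
    (fun x hx => by nlinarith [c4 x hx])
  intro x hx; have := this x hx; linarith

private lemma c6 : ∀ x : ℝ, 0 ≤ x → 1 - x^2/2 + x^4/24 - x^6/720 ≤ Real.cos x := by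
  have := taylor_aux (f := fun x => Real.cos x - (1 - x^2/2 + x^4/24 - x^6/720))
    (f' := fun x => x - x^3/6 + x^5/120 - Real.sin x)
    (fun x => by
      have h := (Real.hasDerivAt_cos x).sub
        ((((hasDerivAt_const x (1:ℝ)).sub (dpoly 2 2 x)).add (dpoly 4 24 x)).sub (dpoly 6 720 x))
      exact h.congr_deriv (by norm_num <;> ring))
    (by norm_num)
    (fun x hx => by nlinarith [s5 x hx])
  intro x hx; have := this x hx; linarith

private lemma s7 : ∀ x : ℝ, 0 ≤ x → x - x^3/6 + x^5/120 - x^7/5040 ≤ Real.sin x := by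
  have := taylor_aux (f := fun x => Real.sin x - (x - x^3/6 + x^5/120 - x^7/5040))
    (f' := fun x => Real.cos x - (1 - x^2/2 + x^4/24 - x^6/720))
    (fun x => by
      have h := (Real.hasDerivAt_sin x).sub
        ((((hasDerivAt_id x).sub (dpoly 3 6 x)).add (dpoly 5 120 x)).sub (dpoly 7 5040 x))
      exact h.congr_deriv (by norm_num <;> ring))
    (by norm_num)
    (fun x hx => by nlinarith [c6 x hx])
  intro x hx; have := this x hx; linarith

private lemma c8 : ∀ x : ℝ, 0 ≤ x → Real.cos x ≤ 1 - x^2/2 + x^4/24 - x^6/720 + x^8/40320 := by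
  have := taylor_aux
    (f := fun x => 1 - x^2/2 + x^4/24 - x^6/720 + x^8/40320 - Real.cos x)
    (f' := fun x => Real.sin x - (x - x^3/6 + x^5/120 - x^7/5040))
    (fun x => by
      have h := (((((hasDerivAt_const x (1:ℝ)).sub (dpoly 2 2 x)).add (dpoly 4 24 x)).sub
        (dpoly 6 720 x)).add (dpoly 8 40320 x)).sub (Real.hasDerivAt_cos x)
      exact h.congr_deriv (by norm_num <;> ring))
    (by norm_num)
    (fun x hx => by nlinarith [s7 x hx])
  intro x hx; have := this x hx; linarith

private lemma s9 : ∀ x : ℝ, 0 ≤ x → Real.sin x ≤ x - x^3/6 + x^5/120 - x^7/5040 + x^9/362880 := by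
  have := taylor_aux
    (f := fun x => x - x^3/6 + x^5/120 - x^7/5040 + x^9/362880 - Real.sin x)
    (f' := fun x => 1 - x^2/2 + x^4/24 - x^6/720 + x^8/40320 - Real.cos x)
    (fun x => by
      have h := ((((((hasDerivAt_id x).sub (dpoly 3 6 x)).add (dpoly 5 120 x)).sub
        (dpoly 7 5040 x)).add (dpoly 9 362880 x)).sub (Real.hasDerivAt_sin x))
      exact h.congr_deriv (by norm_num <;> ring))
    (by norm_num)
    (fun x hx => by nlinarith [c8 x hx])
  intro x hx; have := this x hx; linarith

private lemma c10 : ∀ x : ℝ, 0 ≤ x →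
    1 - x^2/2 + x^4/24 - x^6/720 + x^8/40320 - x^10/3628800 ≤ Real.cos x := by
  have := taylor_aux
    (f := fun x => Real.cos x - (1 - x^2/2 + x^4/24 - x^6/720 + x^8/40320 - x^10/3628800))
    (f' := fun x => (x - x^3/6 + x^5/120 - x^7/5040 + x^9/362880) - Real.sin x)
    (fun x => by
      have h := (Real.hasDerivAt_cos x).sub
        ((((((hasDerivAt_const x (1:ℝ)).sub (dpoly 2 2 x)).add (dpoly 4 24 x)).sub
        (dpoly 6 720 x)).add (dpoly 8 40320 x)).sub (dpoly 10 3628800 x))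
      exact h.congr_deriv (by norm_num <;> ring))
    (by norm_num)
    (fun x hx => by nlinarith [s9 x hx])
  intro x hx; have := this x hx; linarith

private lemma cos_upper (u : ℝ) : Real.cos u ≤ 1 - u^2/2 + u^4/24 - u^6/720 + u^8/40320 := by
  have h := c8 |u| (abs_nonneg u)
  rw [← Real.cos_abs u]
  calc Real.cos |u| ≤ 1 - |u|^2/2 + |u|^4/24 - |u|^6/720 + |u|^8/40320 := h
    _ = 1 - u^2/2 + u^4/24 - u^6/720 + u^8/40320 := by
        rw [sq_abs, show |u|^4 = (|u|^2)^2 by ring, show |u|^6 = (|u|^2)^3 by ring,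
          show |u|^8 = (|u|^2)^4 by ring, sq_abs]; ring

private lemma cos_lower (u : ℝ) :
    1 - u^2/2 + u^4/24 - u^6/720 + u^8/40320 - u^10/3628800 ≤ Real.cos u := by
  have h := c10 |u| (abs_nonneg u)
  rw [← Real.cos_abs u]
  calc (1:ℝ) - u^2/2 + u^4/24 - u^6/720 + u^8/40320 - u^10/3628800
      = 1 - |u|^2/2 + |u|^4/24 - |u|^6/720 + |u|^8/40320 - |u|^10/3628800 := by
        rw [sq_abs, show |u|^4 = (|u|^2)^2 by ring, show |u|^6 = (|u|^2)^3 by ring,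
          show |u|^8 = (|u|^2)^4 by ring, show |u|^10 = (|u|^2)^5 by ring, sq_abs]; ring
    _ ≤ Real.cos |u| := h

private lemma mul_sin_lower (u : ℝ) : u^2 - u^4/6 + u^6/120 - u^8/5040 ≤ u * Real.sin u := by
  rcases le_or_gt 0 u with h | h
  · have := s7 u h; nlinarith
  · have := s7 (-u) (by linarith)
    rw [Real.sin_neg] at this; nlinarith

private lemma mul_sin_upper (u : ℝ) :
    u * Real.sin u ≤ u^2 - u^4/6 + u^6/120 - u^8/5040 + u^10/362880 := by
  rcases le_or_gt 0 u with h | h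
  · have := s9 u h; nlinarith
  · have := s9 (-u) (by linarith)
    rw [Real.sin_neg] at this; nlinarith

/-! #### Integrals of even powers of cosine -/

private lemma icp_step (n : ℕ) : (∫ θ in (0:ℝ)..π, Real.cos θ^(n+2)) =
    (n+1)/(n+2) * ∫ θ in (0:ℝ)..π, Real.cos θ^n := by
  rw [integral_cos_pow]; simp [Real.sin_pi]

private lemma icp0 : (∫ θ in (0:ℝ)..π, Real.cos θ^0) = π := by simp
private lemma icp2 : (∫ θ in (0:ℝ)..π, Real.cos θ^2) = π/2 := by
  rw [icp_step 0, icp0]; norm_num; try ring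
private lemma icp4 : (∫ θ in (0:ℝ)..π, Real.cos θ^4) = 3*π/8 := by
  rw [icp_step 2, icp2]; norm_num; try ring
private lemma icp6 : (∫ θ in (0:ℝ)..π, Real.cos θ^6) = 5*π/16 := by
  rw [icp_step 4, icp4]; norm_num; try ring
private lemma icp8 : (∫ θ in (0:ℝ)..π, Real.cos θ^8) = 35*π/128 := by
  rw [icp_step 6, icp6]; norm_num; try ring
private lemma icp10 : (∫ θ in (0:ℝ)..π, Real.cos θ^10) = 63*π/256 := by
  rw [icp_step 8, icp8]; norm_num; try ring

private lemma int_cospoly (a0 a1 a2 a3 a4 a5 : ℝ) :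
    (∫ θ in (0:ℝ)..π, (a0 + a1*Real.cos θ^2 + a2*Real.cos θ^4 + a3*Real.cos θ^6
      + a4*Real.cos θ^8 + a5*Real.cos θ^10))
    = a0*π + a1*(π/2) + a2*(3*π/8) + a3*(5*π/16) + a4*(35*π/128) + a5*(63*π/256) := by
  have i0 : IntervalIntegrable (fun _ : ℝ => a0) volume 0 π :=
    continuous_const.intervalIntegrable _ _
  have i2 : IntervalIntegrable (fun θ : ℝ => a1 * Real.cos θ^2) volume 0 π := by
    apply Continuous.intervalIntegrable; fun_prop
  have i4 : IntervalIntegrable (fun θ : ℝ => a2 * Real.cos θ^4) volume 0 π := by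
    apply Continuous.intervalIntegrable; fun_prop
  have i6 : IntervalIntegrable (fun θ : ℝ => a3 * Real.cos θ^6) volume 0 π := by
    apply Continuous.intervalIntegrable; fun_prop
  have i8 : IntervalIntegrable (fun θ : ℝ => a4 * Real.cos θ^8) volume 0 π := by
    apply Continuous.intervalIntegrable; fun_prop
  have i10 : IntervalIntegrable (fun θ : ℝ => a5 * Real.cos θ^10) volume 0 π := by
    apply Continuous.intervalIntegrable; fun_prop
  rw [integral_add ((((i0.add i2).add i4).add i6).add i8) i10,
    integral_add (((i0.add i2).add i4).add i6) i8,
    integral_add ((i0.add i2).add i4) i6,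
    integral_add (i0.add i2) i4, integral_add i0 i2,
    intervalIntegral.integral_const_mul, intervalIntegral.integral_const_mul, intervalIntegral.integral_const_mul, intervalIntegral.integral_const_mul,
    intervalIntegral.integral_const_mul, icp2, icp4, icp6, icp8, icp10]
  simp [mul_comm]

/-! #### The three basic integral functions -/

noncomputable def Ifun (k : ℝ) : ℝ := ∫ θ in (0:ℝ)..π, Real.cos (k * Real.cos θ)
noncomputable def Zfun (k : ℝ) : ℝ := ∫ θ in (0:ℝ)..π, Real.cos θ * Real.sin (k * Real.cos θ)
noncomputable def Wfun (k : ℝ) : ℝ := ∫ θ in (0:ℝ)..π, Real.cos θ^2 * Real.cos (k * Real.cos θ)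

private lemma J0int_upper (k : ℝ) : Ifun k
    ≤ π * (1 - k^2/4 + k^4/64 - k^6/2304 + k^8/147456) := by
  have mono : Ifun k ≤
      ∫ θ in (0:ℝ)..π, (1 + (-(k^2)/2)*Real.cos θ^2 + (k^4/24)*Real.cos θ^4
        + (-(k^6)/720)*Real.cos θ^6 + (k^8/40320)*Real.cos θ^8 + 0*Real.cos θ^10) := by
    apply integral_mono_on Real.pi_pos.le
    · apply Continuous.intervalIntegrable; fun_prop
    · apply Continuous.intervalIntegrable; fun_prop
    · intro θ _
      have := cos_upper (k * Real.cos θ)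
      calc Real.cos (k*Real.cos θ)
          ≤ 1 - (k*Real.cos θ)^2/2 + (k*Real.cos θ)^4/24 - (k*Real.cos θ)^6/720
            + (k*Real.cos θ)^8/40320 := this
        _ = 1 + (-(k^2)/2)*Real.cos θ^2 + (k^4/24)*Real.cos θ^4
            + (-(k^6)/720)*Real.cos θ^6 + (k^8/40320)*Real.cos θ^8 + 0*Real.cos θ^10 := by ring
  rw [int_cospoly] at mono
  calc Ifun k ≤ _ := mono
    _ = π * (1 - k^2/4 + k^4/64 - k^6/2304 + k^8/147456) := by ring

private lemma J0int_lower (k : ℝ) :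
    π * (1 - k^2/4 + k^4/64 - k^6/2304 + k^8/147456 - k^10/14745600) ≤ Ifun k := by
  have mono : (∫ θ in (0:ℝ)..π, (1 + (-(k^2)/2)*Real.cos θ^2 + (k^4/24)*Real.cos θ^4
        + (-(k^6)/720)*Real.cos θ^6 + (k^8/40320)*Real.cos θ^8
        + (-(k^10)/3628800)*Real.cos θ^10)) ≤ Ifun k := by
    apply integral_mono_on Real.pi_pos.le
    · apply Continuous.intervalIntegrable; fun_prop
    · apply Continuous.intervalIntegrable; fun_prop
    · intro θ _
      have := cos_lower (k * Real.cos θ)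
      calc (1:ℝ) + (-(k^2)/2)*Real.cos θ^2 + (k^4/24)*Real.cos θ^4
            + (-(k^6)/720)*Real.cos θ^6 + (k^8/40320)*Real.cos θ^8
            + (-(k^10)/3628800)*Real.cos θ^10
          = 1 - (k*Real.cos θ)^2/2 + (k*Real.cos θ)^4/24 - (k*Real.cos θ)^6/720
            + (k*Real.cos θ)^8/40320 - (k*Real.cos θ)^10/3628800 := by ring
        _ ≤ Real.cos (k*Real.cos θ) := this
  rw [int_cospoly] at mono
  calc π * (1 - k^2/4 + k^4/64 - k^6/2304 + k^8/147456 - k^10/14745600) = _ := by ring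
    _ ≤ Ifun k := mono

/-! #### Bounds on `Zfun 2` -/

private lemma Zfun2_lower : 83/144*π ≤ Zfun 2 := by
  have mono : (∫ θ in (0:ℝ)..π, ((0:ℝ) + 2*Real.cos θ^2 + (-(4:ℝ)/3)*Real.cos θ^4
      + (4/15)*Real.cos θ^6 + (-(8:ℝ)/315)*Real.cos θ^8 + 0*Real.cos θ^10)) ≤ Zfun 2 := by
    apply integral_mono_on Real.pi_pos.le
    · apply Continuous.intervalIntegrable; fun_prop
    · apply Continuous.intervalIntegrable; fun_prop
    · intro θ _
      have h := mul_sin_lower (2 * Real.cos θ)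
      nlinarith [h]
  rw [int_cospoly] at mono
  calc (83:ℝ)/144*π = 0*π + 2*(π/2) + (-(4:ℝ)/3)*(3*π/8) + (4/15)*(5*π/16)
      + (-(8:ℝ)/315)*(35*π/128) + 0*(63*π/256) := by ring
    _ ≤ Zfun 2 := mono

private lemma Zfun2_upper : Zfun 2 ≤ 1661/2880*π := by
  have mono : Zfun 2 ≤ (∫ θ in (0:ℝ)..π, ((0:ℝ) + 2*Real.cos θ^2 + (-(4:ℝ)/3)*Real.cos θ^4
      + (4/15)*Real.cos θ^6 + (-(8:ℝ)/315)*Real.cos θ^8 + (4/2835)*Real.cos θ^10)) := by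
    apply integral_mono_on Real.pi_pos.le
    · apply Continuous.intervalIntegrable; fun_prop
    · apply Continuous.intervalIntegrable; fun_prop
    · intro θ _
      have h := mul_sin_upper (2 * Real.cos θ)
      nlinarith [h]
  rw [int_cospoly] at mono
  calc Zfun 2 ≤ _ := mono
    _ = 1661/2880*π := by ring

/-! #### Derivatives and the Bessel ODE -/

private lemma Ifun_deriv (k : ℝ) : HasDerivAt Ifun (-(Zfun k)) k := by
  have key := intervalIntegral.hasDerivAt_integral_of_dominated_loc_of_deriv_le
    (F := fun x t => Real.cos (x * Real.cos t))
    (F' := fun x t => -(Real.cos t * Real.sin (x * Real.cos t)))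
    (x₀ := k) (a := 0) (b := π) (μ := volume) (bound := fun _ => 1)
    (s := Metric.ball k 1) (Metric.ball_mem_nhds k one_pos)
    (Filter.Eventually.of_forall (fun x =>
      (Continuous.aestronglyMeasurable (by fun_prop))))
    ((Continuous.intervalIntegrable (by fun_prop)) _ _)
    (Continuous.aestronglyMeasurable (by fun_prop))
    (Filter.Eventually.of_forall (fun t _ x _ => by
      rw [norm_neg, norm_mul]
      calc ‖Real.cos t‖ * ‖Real.sin (x * Real.cos t)‖ ≤ 1 * 1 := by
            apply mul_le_mul ?_ ?_ (norm_nonneg _) zero_le_one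
            · exact (Real.abs_cos_le_one t)
            · exact (Real.abs_sin_le_one _)
        _ = 1 := by norm_num))
    ((continuous_const.intervalIntegrable) _ _)
    (Filter.Eventually.of_forall (fun t _ x _ => by
      have h1 : HasDerivAt (fun x : ℝ => x * Real.cos t) (Real.cos t) x :=
        hasDerivAt_mul_const _
      have h2 := (Real.hasDerivAt_cos (x * Real.cos t)).comp x h1
      exact h2.congr_deriv (by ring)))
  have h2 := key.2
  have : (∫ t in (0:ℝ)..π, -(Real.cos t * Real.sin (k * Real.cos t))) = -(Zfun k) := by
    rw [intervalIntegral.integral_neg]; rfl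
  rw [this] at h2
  exact h2

private lemma Zfun_deriv (k : ℝ) : HasDerivAt Zfun (Wfun k) k := by
  have key := intervalIntegral.hasDerivAt_integral_of_dominated_loc_of_deriv_le
    (F := fun x t => Real.cos t * Real.sin (x * Real.cos t))
    (F' := fun x t => Real.cos t^2 * Real.cos (x * Real.cos t))
    (x₀ := k) (a := 0) (b := π) (μ := volume) (bound := fun _ => 1)
    (s := Metric.ball k 1) (Metric.ball_mem_nhds k one_pos)
    (Filter.Eventually.of_forall (fun x =>
      (Continuous.aestronglyMeasurable (by fun_prop))))
    ((Continuous.intervalIntegrable (by fun_prop)) _ _)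
    (Continuous.aestronglyMeasurable (by fun_prop))
    (Filter.Eventually.of_forall (fun t _ x _ => by
      rw [norm_mul]
      calc ‖Real.cos t^2‖ * ‖Real.cos (x * Real.cos t)‖ ≤ 1 * 1 := by
            apply mul_le_mul ?_ ?_ (norm_nonneg _) zero_le_one
            · rw [norm_pow]
              exact pow_le_one₀ (norm_nonneg _) (Real.abs_cos_le_one t)
            · exact (Real.abs_cos_le_one _)
        _ = 1 := by norm_num))
    ((continuous_const.intervalIntegrable) _ _)
    (Filter.Eventually.of_forall (fun t _ x _ => by
      have h1 : HasDerivAt (fun x : ℝ => x * Real.cos t) (Real.cos t) x :=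
        hasDerivAt_mul_const _
      have h2 := ((Real.hasDerivAt_sin (x * Real.cos t)).comp x h1).const_mul (Real.cos t)
      exact h2.congr_deriv (by ring)))
  exact key.2

private lemma bessel_ode (k : ℝ) : Zfun k = k * (Ifun k - Wfun k) := by
  have hderiv : ∀ θ ∈ Set.uIcc (0:ℝ) π, HasDerivAt
      (fun θ => Real.sin θ * Real.sin (k * Real.cos θ))
      (Real.cos θ * Real.sin (k * Real.cos θ)
        - k * ((1 - Real.cos θ^2) * Real.cos (k * Real.cos θ))) θ := by
    intro θ _
    have h1 : HasDerivAt (fun θ : ℝ => k * Real.cos θ) (k * (-Real.sin θ)) θ :=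
      (Real.hasDerivAt_cos θ).const_mul k
    have h2 : HasDerivAt (fun θ : ℝ => Real.sin (k * Real.cos θ))
        (Real.cos (k * Real.cos θ) * (k * (-Real.sin θ))) θ :=
      by have := (Real.hasDerivAt_sin (k * Real.cos θ)).comp θ h1; exact this
    have h3 := (Real.hasDerivAt_sin θ).mul h2
    refine h3.congr_deriv ?_
    have := Real.sin_sq_add_cos_sq θ
    linear_combination -(k * Real.cos (k * Real.cos θ)) * this
  have hint : IntervalIntegrable (fun θ => Real.cos θ * Real.sin (k * Real.cos θ)
      - k * ((1 - Real.cos θ^2) * Real.cos (k * Real.cos θ))) volume 0 π := by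
    apply Continuous.intervalIntegrable; fun_prop
  have ftc := intervalIntegral.integral_eq_sub_of_hasDerivAt hderiv hint
  simp [Real.sin_pi] at ftc
  have i1 : IntervalIntegrable (fun θ => Real.cos θ * Real.sin (k * Real.cos θ)) volume 0 π := by
    apply Continuous.intervalIntegrable; fun_prop
  have i2 : IntervalIntegrable (fun θ => k * ((1 - Real.cos θ^2) * Real.cos (k * Real.cos θ)))
      volume 0 π := by
    apply Continuous.intervalIntegrable; fun_prop
  rw [intervalIntegral.integral_sub i1 i2, intervalIntegral.integral_const_mul] at ftc
  have i3 : IntervalIntegrable (fun θ => Real.cos (k * Real.cos θ)) volume 0 π := by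
    apply Continuous.intervalIntegrable; fun_prop
  have i4 : IntervalIntegrable (fun θ => Real.cos θ^2 * Real.cos (k * Real.cos θ)) volume 0 π := by
    apply Continuous.intervalIntegrable; fun_prop
  have expand : (∫ θ in (0:ℝ)..π, (1 - Real.cos θ^2) * Real.cos (k * Real.cos θ))
      = Ifun k - Wfun k := by
    have : (fun θ => (1 - Real.cos θ^2) * Real.cos (k * Real.cos θ))
        = fun θ => Real.cos (k * Real.cos θ) - Real.cos θ^2 * Real.cos (k * Real.cos θ) := by
      funext θ; ring
    rw [this, intervalIntegral.integral_sub i3 i4]; rfl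
  rw [expand] at ftc
  have : Zfun k - k * (Ifun k - Wfun k) = 0 := ftc
  linarith

/-! #### The energy function -/

noncomputable def Ffun (k : ℝ) : ℝ :=
  (k+1) * ((Ifun k)^2 + (Zfun k)^2) - (1+1/k) * (Ifun k * Zfun k)

private lemma Ffun_deriv (k : ℝ) (hk : 0 < k) : HasDerivAt Ffun
    (-(Ifun k)^2/k - (Zfun k)^2/k + (1/k + 2/k^2) * (Ifun k * Zfun k)) k := by
  have hI := Ifun_deriv k
  have hZ := Zfun_deriv k
  have hW : Wfun k = Ifun k - Zfun k / k := by
    have := bessel_ode k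
    field_simp at this ⊢
    linarith
  have h1 : HasDerivAt (fun x => (x+1) * ((Ifun x)^2 + (Zfun x)^2))
      (1 * ((Ifun k)^2 + (Zfun k)^2)
        + (k+1) * (2 * Ifun k * (-(Zfun k)) + 2 * Zfun k * Wfun k)) k := by
    have ha : HasDerivAt (fun x : ℝ => x + 1) 1 k := (hasDerivAt_id k).add_const 1
    have hb : HasDerivAt (fun x => (Ifun x)^2 + (Zfun x)^2)
        (2 * Ifun k * (-(Zfun k)) + 2 * Zfun k * Wfun k) k := by
      have := ((hI.pow 2).add (hZ.pow 2))
      refine this.congr_deriv ?_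
      push_cast; ring
    exact (ha.mul hb).congr_deriv (by ring)
  have h2 : HasDerivAt (fun x => (1+1/x) * (Ifun x * Zfun x))
      ((-(1/k^2)) * (Ifun k * Zfun k)
        + (1+1/k) * ((-(Zfun k)) * Zfun k + Ifun k * Wfun k)) k := by
    have ha : HasDerivAt (fun x : ℝ => 1 + 1/x) (-(1/k^2)) k := by
      have := ((hasDerivAt_inv (ne_of_gt hk)).const_add 1)
      simpa [one_div] using this
    have hb : HasDerivAt (fun x => Ifun x * Zfun x)
        ((-(Zfun k)) * Zfun k + Ifun k * Wfun k) k := hI.mul hZ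
    exact ha.mul hb
  have := h1.sub h2
  refine this.congr_deriv ?_
  rw [hW]
  field_simp
  ring

private lemma Ffun_antitone : AntitoneOn Ffun (Set.Ici (2:ℝ)) := by
  apply antitoneOn_of_deriv_nonpos (convex_Ici 2)
  · intro x hx
    exact ((Ffun_deriv x (by simp at hx; linarith)).continuousAt).continuousWithinAt
  · intro x hx
    simp only [interior_Ici] at hx
    exact ((Ffun_deriv x (by simp at hx; linarith)).differentiableAt).differentiableWithinAt
  · intro x hx
    simp only [interior_Ici, Set.mem_Ioi] at hx
    rw [(Ffun_deriv x (by linarith)).deriv]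
    have hx0 : (0:ℝ) < x := by linarith
    set I := Ifun x; set Z := Zfun x
    have h1 : 0 ≤ x * (I^2 + Z^2) - (x+2) * (I * Z) := by
      rcases le_or_gt 0 (I * Z) with h | h
      · nlinarith [sq_nonneg (I - Z)]
      · nlinarith [sq_nonneg (I + Z)]
    have key : x^2 * (-I^2/x - Z^2/x + (1/x + 2/x^2) * (I * Z))
        = -(x * (I^2 + Z^2) - (x+2) * (I * Z)) := by
      field_simp; ring
    nlinarith [mul_pos hx0 hx0, sq_nonneg x]

private lemma Ffun_lower (k : ℝ) (hk : 2 ≤ k) :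
    Real.sqrt (1+k^2) * (Ifun k)^2 ≤ Ffun k := by
  have hk0 : (0:ℝ) < k := by linarith
  have hs : Real.sqrt (1+k^2) ≤ k + 1/(2*k) := by
    rw [show k + 1/(2*k) = Real.sqrt ((k + 1/(2*k))^2) from
      (Real.sqrt_sq (by positivity)).symm]
    apply Real.sqrt_le_sqrt
    have : (k + 1/(2*k))^2 = k^2 + 1 + (1/(2*k))^2 := by field_simp; ring
    nlinarith [sq_nonneg (1/(2*k))]
  set I := Ifun k; set Z := Zfun k
  have hq : 0 ≤ (k - 1/2)*I^2 + k*(k+1)*Z^2 - (k+1)*(I*Z) := by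
    have hz : 0 ≤ (4*k^3 + 2*k^2 - 2*k - (k+1)^2)*Z^2 :=
      mul_nonneg (by nlinarith) (sq_nonneg Z)
    nlinarith [sq_nonneg ((2*k-1)*I - (k+1)*Z), hz]
  have hIZ : Real.sqrt (1+k^2) * I^2 ≤ (k + 1/(2*k)) * I^2 :=
    mul_le_mul_of_nonneg_right hs (sq_nonneg I)
  have key : k * ((k + 1/(2*k)) * I^2) ≤ k * (Ffun k) := by
    have expand : k * (Ffun k) - k * ((k + 1/(2*k)) * I^2)
        = (k - 1/2)*I^2 + k*(k+1)*Z^2 - (k+1)*(I*Z) := by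
      show k * ((k+1) * (I^2 + Z^2) - (1+1/k) * (I * Z)) - _ = _
      field_simp
      ring
    linarith
  have := (mul_le_mul_iff_right₀ hk0).mp key
  linarith

private lemma Ffun2_le : Ffun 2 ≤ π^2 := by
  have hIl : 403/1800*π ≤ Ifun 2 := by
    have := J0int_lower 2
    calc (403:ℝ)/1800*π = π * (1 - 2^2/4 + 2^4/64 - 2^6/2304 + 2^8/147456
        - 2^10/14745600) := by rw [mul_comm]; norm_num
      _ ≤ Ifun 2 := this
  have hIu : Ifun 2 ≤ 43/192*π := by
    have := J0int_upper 2
    calc Ifun 2 ≤ π * (1 - 2^2/4 + 2^4/64 - 2^6/2304 + 2^8/147456) := this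
      _ = 43/192*π := by rw [mul_comm]; norm_num
  have hZl := Zfun2_lower
  have hZu := Zfun2_upper
  have hpi := Real.pi_pos
  have hF : Ffun 2 = 3 * ((Ifun 2)^2 + (Zfun 2)^2) - (3/2) * (Ifun 2 * Zfun 2) := by
    show (2+1) * _ - (1+1/2) * _ = _
    norm_num
  rw [hF]
  have hI0 : 0 < Ifun 2 := lt_of_lt_of_le (by positivity) hIl
  have hZ0 : 0 < Zfun 2 := lt_of_lt_of_le (by positivity) hZl
  have e1 : (Ifun 2)^2 ≤ (43/192*π)^2 := by nlinarith
  have e2 : (Zfun 2)^2 ≤ (1661/2880*π)^2 := by nlinarith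
  have e3 : (403/1800*π)*(83/144*π) ≤ Ifun 2 * Zfun 2 := by
    apply mul_le_mul hIl hZl (by positivity) hI0.le
  nlinarith [sq_nonneg π]

end Aux

/-! ### Main theorem -/

private lemma rpow_conv (A : ℝ) (hA : 0 < A) :
    A ^ (-(1:ℝ)/4) = (Real.sqrt (Real.sqrt A))⁻¹ := by
  rw [Real.sqrt_eq_rpow, Real.sqrt_eq_rpow, ← Real.rpow_mul hA.le, ← Real.rpow_neg hA.le]
  congr 1
  norm_num

private lemma poly_nonneg (x : ℝ) (hx0 : 0 ≤ x) (hx4 : x ≤ 4) :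
    0 ≤ 1 - x/4 + x^2/64 - x^3/2304 + x^4/147456 - x^5/14745600 := by
  nlinarith [sq_nonneg (x-2), sq_nonneg x, sq_nonneg (x^2-4*x),
    pow_le_pow_left₀ hx0 hx4 3, pow_le_pow_left₀ hx0 hx4 5, mul_nonneg hx0 hx0]

private lemma poly_le_inv_sqrt (x : ℝ) (hx0 : 0 ≤ x) (hx4 : x ≤ 4) :
    1 - x/4 + x^2/64 - x^3/2304 + x^4/147456 ≤ (Real.sqrt (Real.sqrt (1+x)))⁻¹ := by
  set P : ℝ := 1 - x/4 + x^2/64 - x^3/2304 + x^4/147456 with hPdef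
  have hP0 : 0 ≤ P := by
    have h5 := poly_nonneg x hx0 hx4
    have hx5 : (0:ℝ) ≤ x^5/14745600 := by positivity
    rw [hPdef]; linarith
  have hS : (1 + x/2) * P^2 ≤ 1 := by
    have p2 : (0:ℝ) ≤ x^2 := sq_nonneg x
    have p4 : (0:ℝ) ≤ x^4 := by positivity
    have p6 : (0:ℝ) ≤ x^6 := by positivity
    have p8 : (0:ℝ) ≤ x^8 := by positivity
    have m1 : 0 ≤ x^2 * (5/32 - 11*x/288) := mul_nonneg p2 (by linarith)
    have m2 : 0 ≤ x^4 * (95/24576 - 65*x/294912) := mul_nonneg p4 (by linarith)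
    have m3 : 0 ≤ x^6 * (343/42467328 - 11*x/56623104) := mul_nonneg p6 (by linarith)
    have m4 : 0 ≤ x^8 * (7/2415919104 - x/43486543872) := mul_nonneg p8 (by linarith)
    rw [hPdef]
    nlinarith [m1, m2, m3, m4]
  have hsx0 : (0:ℝ) < Real.sqrt (1+x) := Real.sqrt_pos.2 (by linarith)
  have hsx : Real.sqrt (1+x) ≤ 1 + x/2 := by
    rw [show (1:ℝ) + x/2 = Real.sqrt ((1+x/2)^2) from (Real.sqrt_sq (by linarith)).symm]
    apply Real.sqrt_le_sqrt
    nlinarith [sq_nonneg x]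
  have hstep1 : P^2 * Real.sqrt (1+x) ≤ 1 := by
    have h5 := mul_le_mul_of_nonneg_left hsx (sq_nonneg P)
    calc P^2 * Real.sqrt (1+x) ≤ P^2 * (1 + x/2) := h5
      _ = (1 + x/2) * P^2 := by ring
      _ ≤ 1 := hS
  have h3 : P^2 ≤ (Real.sqrt (1+x))⁻¹ := by
    rw [← one_div]
    exact (le_div_iff₀ hsx0).mpr hstep1
  calc P = Real.sqrt (P^2) := (Real.sqrt_sq hP0).symm
    _ ≤ Real.sqrt ((Real.sqrt (1+x))⁻¹) := Real.sqrt_le_sqrt h3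
    _ = (Real.sqrt (Real.sqrt (1+x)))⁻¹ := Real.sqrt_inv _

private lemma J0_main (k : ℝ) (hk : 0 ≤ k) : |J0 k| ≤ (1 + k ^ 2) ^ (-(1:ℝ)/4) := by
  have hA : (0:ℝ) < 1 + k^2 := by positivity
  have hsA : (0:ℝ) < Real.sqrt (1+k^2) := Real.sqrt_pos.2 hA
  rw [rpow_conv _ hA]
  have hJ : J0 k = (1/π) * Ifun k := rfl
  have hpi := Real.pi_pos
  rcases le_or_gt k 2 with hk2 | hk2
  · -- small k : power series bounds
    have hx4 : k^2 ≤ 4 := by nlinarith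
    have hx0 : (0:ℝ) ≤ k^2 := sq_nonneg k
    have hup : J0 k ≤ 1 - k^2/4 + (k^2)^2/64 - (k^2)^3/2304 + (k^2)^4/147456 := by
      rw [hJ]
      have h := J0int_upper k
      rw [div_mul_eq_mul_div, one_mul, div_le_iff₀ hpi]
      calc Ifun k ≤ π * (1 - k^2/4 + k^4/64 - k^6/2304 + k^8/147456) := h
        _ = (1 - k^2/4 + (k^2)^2/64 - (k^2)^3/2304 + (k^2)^4/147456) * π := by ring
    have hlo : 0 ≤ J0 k := by
      rw [hJ]
      have h := J0int_lower k
      have h1 : 0 ≤ Ifun k := by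
        refine le_trans ?_ h
        apply mul_nonneg hpi.le
        calc (0:ℝ) ≤ 1 - k^2/4 + (k^2)^2/64 - (k^2)^3/2304 + (k^2)^4/147456
            - (k^2)^5/14745600 := poly_nonneg (k^2) hx0 hx4
          _ = 1 - k^2/4 + k^4/64 - k^6/2304 + k^8/147456 - k^10/14745600 := by ring
      positivity
    rw [abs_of_nonneg hlo]
    exact le_trans hup (poly_le_inv_sqrt (k^2) hx0 hx4)
  · -- large k : energy argument
    have hk2' : (2:ℝ) ≤ k := hk2.le
    have chain : Real.sqrt (1+k^2) * (Ifun k)^2 ≤ π^2 := by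
      calc Real.sqrt (1+k^2) * (Ifun k)^2 ≤ Ffun k := Ffun_lower k hk2'
        _ ≤ Ffun 2 := Ffun_antitone (Set.self_mem_Ici) (by exact hk2') hk2'
        _ ≤ π^2 := Ffun2_le
    have hJsq : (J0 k)^2 * Real.sqrt (1+k^2) ≤ 1 := by
      have hexp : (J0 k)^2 * Real.sqrt (1+k^2) * π^2 = Real.sqrt (1+k^2) * (Ifun k)^2 := by
        rw [hJ]; field_simp
      have hle : (J0 k)^2 * Real.sqrt (1+k^2) * π^2 ≤ 1 * π^2 := by
        rw [hexp, one_mul]; exact chain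
      exact le_of_mul_le_mul_right hle (by positivity)
    have h3 : (J0 k)^2 ≤ (Real.sqrt (1+k^2))⁻¹ := by
      rw [← one_div]
      exact (le_div_iff₀ hsA).mpr hJsq
    calc |J0 k| = Real.sqrt ((J0 k)^2) := (Real.sqrt_sq_eq_abs _).symm
      _ ≤ Real.sqrt ((Real.sqrt (1+k^2))⁻¹) := Real.sqrt_le_sqrt h3
      _ = (Real.sqrt (Real.sqrt (1+k^2)))⁻¹ := Real.sqrt_inv _

theorem J0_decay_bound (k : ℝ) : |J0 k| ≤ (1 + k ^ 2) ^ (-(1:ℝ)/4) := by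
  rcases le_or_gt 0 k with hk | hk
  · exact J0_main k hk
  · have hJ : J0 (-k) = J0 k := by
      unfold J0
      congr 1
      apply intervalIntegral.integral_congr
      intro θ _
      simp
    have h := J0_main (-k) (by linarith)
    rw [hJ, show (-k)^2 = k^2 by ring] at h
    exact h
end

section
/- For every k ≥ 0, k · (J⁰(k))² ≤ 2^(-1/2). -/
open MeasureTheory Real

set_option linter.unreachableTactic false
set_option linter.unusedTactic false

/- ### Auxiliary Taylor-type bounds for sin and cos -/

lemma nonneg_of_deriv' {f f' : ℝ → ℝ} (hd : ∀ t, HasDerivAt f (f' t) t)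
    (h0 : f 0 = 0) (hf' : ∀ t, 0 ≤ t → 0 ≤ f' t) {t : ℝ} (ht : 0 ≤ t) : 0 ≤ f t := by
  have hm : MonotoneOn f (Set.Ici 0) := by
    apply monotoneOn_of_deriv_nonneg (convex_Ici 0)
      (fun x _ => (hd x).continuousAt.continuousWithinAt)
      (fun x _ => (hd x).differentiableAt.differentiableWithinAt)
    intro x hx
    rw [(hd x).deriv]
    exact hf' x (le_of_lt (by simpa using hx))
  calc (0:ℝ) = f 0 := h0.symm
  _ ≤ f t := hm (Set.self_mem_Ici) ht ht

lemma sin_ge_cubic' {t : ℝ} (ht : 0 ≤ t) : t - t^3/6 ≤ sin t := by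
  have := nonneg_of_deriv' (f := fun t => sin t - t + t^3/6) (f' := fun t => cos t - 1 + t^2/2)
    (fun t => by
      have h := ((Real.hasDerivAt_sin t).sub (hasDerivAt_id t)).add
          ((hasDerivAt_pow 3 t).div_const 6)
      refine h.congr_deriv ?_
      push_cast; ring)
    (by norm_num) (fun t _ => by nlinarith [Real.one_sub_sq_div_two_le_cos (x := t)]) ht
  linarith

lemma cos_le_quartic' (t : ℝ) : cos t ≤ 1 - t^2/2 + t^4/24 := by
  wlog ht : 0 ≤ t with H
  · have h := H (-t) (by linarith)
    rw [Real.cos_neg] at h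
    nlinarith [h]
  have := nonneg_of_deriv' (f := fun t => 1 - t^2/2 + t^4/24 - cos t)
    (f' := fun t => -t + t^3/6 + sin t)
    (fun t => by
      have h := (((hasDerivAt_const t (1:ℝ)).sub ((hasDerivAt_pow 2 t).div_const 2)).add
          ((hasDerivAt_pow 4 t).div_const 24)).sub (Real.hasDerivAt_cos t)
      refine h.congr_deriv ?_
      push_cast; ring)
    (by norm_num) (fun t ht => by nlinarith [sin_ge_cubic' ht]) ht
  linarith

lemma sin_le_quintic' {t : ℝ} (ht : 0 ≤ t) : sin t ≤ t - t^3/6 + t^5/120 := by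
  have := nonneg_of_deriv' (f := fun t => t - t^3/6 + t^5/120 - sin t)
    (f' := fun t => 1 - t^2/2 + t^4/24 - cos t)
    (fun t => by
      have h := (((hasDerivAt_id t).sub ((hasDerivAt_pow 3 t).div_const 6)).add
          ((hasDerivAt_pow 5 t).div_const 120)).sub (Real.hasDerivAt_sin t)
      refine h.congr_deriv ?_
      push_cast; ring)
    (by norm_num) (fun t _ => by nlinarith [cos_le_quartic' t]) ht
  linarith

lemma cos_ge_sextic' (t : ℝ) : 1 - t^2/2 + t^4/24 - t^6/720 ≤ cos t := by
  wlog ht : 0 ≤ t with H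
  · have h := H (-t) (by linarith)
    rw [Real.cos_neg] at h
    nlinarith [h]
  have := nonneg_of_deriv' (f := fun t => cos t - (1 - t^2/2 + t^4/24 - t^6/720))
    (f' := fun t => -sin t + (t - t^3/6 + t^5/120))
    (fun t => by
      have h := (Real.hasDerivAt_cos t).sub
          ((((hasDerivAt_const t (1:ℝ)).sub ((hasDerivAt_pow 2 t).div_const 2)).add
          ((hasDerivAt_pow 4 t).div_const 24)).sub ((hasDerivAt_pow 6 t).div_const 720))
      refine h.congr_deriv ?_
      push_cast; ring)
    (by norm_num) (fun t ht => by nlinarith [sin_le_quintic' ht]) ht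
  linarith

lemma sin_ge_septic' {t : ℝ} (ht : 0 ≤ t) : t - t^3/6 + t^5/120 - t^7/5040 ≤ sin t := by
  have := nonneg_of_deriv' (f := fun t => sin t - (t - t^3/6 + t^5/120 - t^7/5040))
    (f' := fun t => cos t - (1 - t^2/2 + t^4/24 - t^6/720))
    (fun t => by
      have h := (Real.hasDerivAt_sin t).sub
          ((((hasDerivAt_id t).sub ((hasDerivAt_pow 3 t).div_const 6)).add
          ((hasDerivAt_pow 5 t).div_const 120)).sub ((hasDerivAt_pow 7 t).div_const 5040))
      refine h.congr_deriv ?_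
      push_cast; ring)
    (by norm_num) (fun t _ => by nlinarith [cos_ge_sextic' t]) ht
  linarith

lemma cos_le_octic' (t : ℝ) : cos t ≤ 1 - t^2/2 + t^4/24 - t^6/720 + t^8/40320 := by
  wlog ht : 0 ≤ t with H
  · have h := H (-t) (by linarith)
    rw [Real.cos_neg] at h
    nlinarith [h]
  have := nonneg_of_deriv' (f := fun t => (1 - t^2/2 + t^4/24 - t^6/720 + t^8/40320) - cos t)
    (f' := fun t => -(t - t^3/6 + t^5/120 - t^7/5040) + sin t)
    (fun t => by
      have h := (((((hasDerivAt_const t (1:ℝ)).sub ((hasDerivAt_pow 2 t).div_const 2)).add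
          ((hasDerivAt_pow 4 t).div_const 24)).sub ((hasDerivAt_pow 6 t).div_const 720)).add
          ((hasDerivAt_pow 8 t).div_const 40320)).sub (Real.hasDerivAt_cos t)
      refine h.congr_deriv ?_
      push_cast; ring)
    (by norm_num) (fun t ht => by nlinarith [sin_ge_septic' ht]) ht
  linarith

/- ### Wallis-type integrals -/

lemma cos_pow_integrable' (n : ℕ) : IntervalIntegrable (fun θ : ℝ => cos θ ^ n) volume 0 π :=
  (continuous_cos.pow n).intervalIntegrable 0 π

lemma wallis2' : ∫ θ in (0:ℝ)..π, cos θ ^ 2 = π/2 := by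
  simp [integral_cos_sq]

lemma wallis4' : ∫ θ in (0:ℝ)..π, cos θ ^ 4 = 3*π/8 := by
  have h := integral_cos_pow (a := 0) (b := π) 2
  rw [wallis2'] at h
  simp at h
  rw [show (4:ℕ) = 2 + 2 by rfl, h]
  ring

lemma wallis6' : ∫ θ in (0:ℝ)..π, cos θ ^ 6 = 5*π/16 := by
  have h := integral_cos_pow (a := 0) (b := π) 4
  rw [wallis4'] at h
  simp at h
  rw [show (6:ℕ) = 4 + 2 by rfl, h]
  ring

lemma wallis8' : ∫ θ in (0:ℝ)..π, cos θ ^ 8 = 35*π/128 := by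
  have h := integral_cos_pow (a := 0) (b := π) 6
  rw [wallis6'] at h
  simp at h
  rw [show (8:ℕ) = 6 + 2 by rfl, h]
  ring

lemma integral_poly_cos' (a0 a2 a4 a6 a8 : ℝ) :
    ∫ θ in (0:ℝ)..π, (a0 + a2 * cos θ^2 + a4 * cos θ^4 + a6 * cos θ^6 + a8 * cos θ^8)
      = π * (a0 + a2/2 + a4*3/8 + a6*5/16 + a8*35/128) := by
  have i0 : IntervalIntegrable (fun _ : ℝ => a0) volume 0 π := intervalIntegrable_const
  have i2 := (cos_pow_integrable' 2).const_mul a2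
  have i4 := (cos_pow_integrable' 4).const_mul a4
  have i6 := (cos_pow_integrable' 6).const_mul a6
  have i8 := (cos_pow_integrable' 8).const_mul a8
  rw [intervalIntegral.integral_add (((i0.add i2).add i4).add i6) i8,
    intervalIntegral.integral_add ((i0.add i2).add i4) i6,
    intervalIntegral.integral_add (i0.add i2) i4,
    intervalIntegral.integral_add i0 i2,
    intervalIntegral.integral_const_mul, intervalIntegral.integral_const_mul,
    intervalIntegral.integral_const_mul, intervalIntegral.integral_const_mul,
    wallis2', wallis4', wallis6', wallis8']
  simp
  ring

lemma poly_integrable' (a0 a2 a4 a6 a8 : ℝ) :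
    IntervalIntegrable
      (fun θ : ℝ => a0 + a2 * cos θ^2 + a4 * cos θ^4 + a6 * cos θ^6 + a8 * cos θ^8) volume 0 π := by
  apply Continuous.intervalIntegrable; fun_prop

/-- minus the first-order Bessel function: the derivative of `J0`. -/
noncomputable def D1 (k : ℝ) : ℝ :=
  (1 / Real.pi) * ∫ θ in (0:ℝ)..Real.pi, -(Real.cos θ * Real.sin (k * Real.cos θ))

/-- The second derivative of `J0`. -/
noncomputable def D2 (k : ℝ) : ℝ :=
  (1 / Real.pi) * ∫ θ in (0:ℝ)..Real.pi, -(Real.cos θ ^ 2 * Real.cos (k * Real.cos θ))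

/- ### polynomial bounds on `J0` and on the `D1` integral -/

lemma J0_integrand_integrable' (k : ℝ) :
    IntervalIntegrable (fun θ : ℝ => cos (k * cos θ)) volume 0 π := by
  apply Continuous.intervalIntegrable; fun_prop

lemma J0_le_aux (k a0 a2 a4 a6 a8 : ℝ)
    (h : ∀ θ : ℝ, cos (k * cos θ) ≤ a0 + a2 * cos θ^2 + a4 * cos θ^4 + a6 * cos θ^6 + a8 * cos θ^8) :
    J0 k ≤ a0 + a2/2 + a4*3/8 + a6*5/16 + a8*35/128 := by
  have hm := intervalIntegral.integral_mono_on pi_pos.le (J0_integrand_integrable' k)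
    (poly_integrable' a0 a2 a4 a6 a8) (fun θ _ => h θ)
  rw [integral_poly_cos'] at hm
  unfold J0
  rw [div_mul_eq_mul_div, one_mul, div_le_iff₀ pi_pos]
  linarith

lemma J0_ge_aux (k a0 a2 a4 a6 a8 : ℝ)
    (h : ∀ θ : ℝ, a0 + a2 * cos θ^2 + a4 * cos θ^4 + a6 * cos θ^6 + a8 * cos θ^8 ≤ cos (k * cos θ)) :
    a0 + a2/2 + a4*3/8 + a6*5/16 + a8*35/128 ≤ J0 k := by
  have hm := intervalIntegral.integral_mono_on pi_pos.le
    (poly_integrable' a0 a2 a4 a6 a8) (J0_integrand_integrable' k) (fun θ _ => h θ)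
  rw [integral_poly_cos'] at hm
  unfold J0
  rw [div_mul_eq_mul_div, one_mul, le_div_iff₀ pi_pos]
  linarith

lemma J0_le_quartic (k : ℝ) : J0 k ≤ 1 - k^2/4 + k^4/64 := by
  have := J0_le_aux k 1 (-(k^2)/2) (k^4/24) 0 0 (fun θ => by
    refine le_trans (cos_le_quartic' (k * cos θ)) (le_of_eq ?_); ring)
  linarith

lemma J0_ge_quadratic (k : ℝ) : 1 - k^2/4 ≤ J0 k := by
  have := J0_ge_aux k 1 (-(k^2)/2) 0 0 0 (fun θ => by
    have := Real.one_sub_sq_div_two_le_cos (x := k * cos θ)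
    nlinarith [this])
  linarith

lemma J0_le_octic (k : ℝ) : J0 k ≤ 1 - k^2/4 + k^4/64 - k^6/2304 + k^8/147456 := by
  have := J0_le_aux k 1 (-(k^2)/2) (k^4/24) (-(k^6)/720) (k^8/40320) (fun θ => by
    refine le_trans (cos_le_octic' (k * cos θ)) (le_of_eq ?_); ring)
  linarith

lemma J0_ge_sextic (k : ℝ) : 1 - k^2/4 + k^4/64 - k^6/2304 ≤ J0 k := by
  have := J0_ge_aux k 1 (-(k^2)/2) (k^4/24) (-(k^6)/720) 0 (fun θ => by
    refine le_trans (le_of_eq ?_) (cos_ge_sextic' (k * cos θ)); ring)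
  linarith

lemma sin_integrand_upper {k : ℝ} (hk : 0 ≤ k) (θ : ℝ) :
    cos θ * sin (k * cos θ)
      ≤ 0 + k * cos θ^2 + (-(k^3)/6) * cos θ^4 + (k^5/120) * cos θ^6 + 0 * cos θ^8 := by
  rcases le_or_gt 0 (cos θ) with hc | hc
  · have h := sin_le_quintic' (t := k * cos θ) (by positivity)
    nlinarith [mul_le_mul_of_nonneg_left h hc]
  · have h := sin_le_quintic' (t := -(k * cos θ)) (by nlinarith)
    rw [Real.sin_neg] at h
    nlinarith [mul_le_mul_of_nonneg_left h (by linarith : (0:ℝ) ≤ -cos θ)]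

lemma sin_integrand_lower {k : ℝ} (hk : 0 ≤ k) (θ : ℝ) :
    0 + k * cos θ^2 + (-(k^3)/6) * cos θ^4 + (k^5/120) * cos θ^6 + (-(k^7)/5040) * cos θ^8
      ≤ cos θ * sin (k * cos θ) := by
  rcases le_or_gt 0 (cos θ) with hc | hc
  · have h := sin_ge_septic' (t := k * cos θ) (by positivity)
    nlinarith [mul_le_mul_of_nonneg_left h hc]
  · have h := sin_ge_septic' (t := -(k * cos θ)) (by nlinarith)
    rw [Real.sin_neg] at h
    nlinarith [mul_le_mul_of_nonneg_left h (by linarith : (0:ℝ) ≤ -cos θ)]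

lemma S_integrand_integrable' (k : ℝ) :
    IntervalIntegrable (fun θ : ℝ => cos θ * sin (k * cos θ)) volume 0 π := by
  apply Continuous.intervalIntegrable; fun_prop

lemma S_upper {k : ℝ} (hk : 0 ≤ k) :
    ∫ θ in (0:ℝ)..π, cos θ * sin (k * cos θ) ≤ π * (k/2 - k^3/16 + k^5/384) := by
  have hm := intervalIntegral.integral_mono_on pi_pos.le (S_integrand_integrable' k)
    (poly_integrable' 0 k (-(k^3)/6) (k^5/120) 0) (fun θ _ => sin_integrand_upper hk θ)
  rw [integral_poly_cos'] at hm
  calc (∫ θ in (0:ℝ)..π, cos θ * sin (k * cos θ)) ≤ _ := hm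
  _ = π * (k/2 - k^3/16 + k^5/384) := by ring

lemma S_lower {k : ℝ} (hk : 0 ≤ k) :
    π * (k/2 - k^3/16 + k^5/384 - k^7/18432) ≤ ∫ θ in (0:ℝ)..π, cos θ * sin (k * cos θ) := by
  have hm := intervalIntegral.integral_mono_on pi_pos.le
    (poly_integrable' 0 k (-(k^3)/6) (k^5/120) (-(k^7)/5040)) (S_integrand_integrable' k)
    (fun θ _ => sin_integrand_lower hk θ)
  rw [integral_poly_cos'] at hm
  calc π * (k/2 - k^3/16 + k^5/384 - k^7/18432) = _ := by ring
  _ ≤ _ := hm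

/- ### derivatives of `J0` and the Bessel differential equation -/

lemma hasDerivAt_J0 (k : ℝ) : HasDerivAt J0 (D1 k) k := by
  have h := intervalIntegral.hasDerivAt_integral_of_dominated_loc_of_deriv_le
    (F := fun x θ => Real.cos (x * Real.cos θ))
    (F' := fun x θ => -(Real.cos θ * Real.sin (x * Real.cos θ)))
    (x₀ := k) (a := 0) (b := π) (bound := fun _ => 1) (s := Metric.ball k 1) (Metric.ball_mem_nhds k one_pos)
    (Filter.Eventually.of_forall fun x =>
      (Continuous.aestronglyMeasurable (by fun_prop)))
    ((Continuous.intervalIntegrable (by fun_prop)) 0 π)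
    (Continuous.aestronglyMeasurable (by fun_prop))
    (Filter.Eventually.of_forall fun t _ x _ => by
      rw [norm_neg, norm_mul, Real.norm_eq_abs, Real.norm_eq_abs]
      exact mul_le_one₀ (abs_cos_le_one t) (abs_nonneg _) (abs_sin_le_one _))
    (intervalIntegrable_const : IntervalIntegrable (fun _ => (1:ℝ)) volume 0 π)
    (Filter.Eventually.of_forall fun t _ x _ => by
      have h1 : HasDerivAt (fun x : ℝ => x * Real.cos t) (Real.cos t) x := by
        simpa using (hasDerivAt_id x).mul_const (Real.cos t)
      have h2 := h1.cos
      refine h2.congr_deriv ?_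
      ring)
  exact h.2.const_mul (1/π)

lemma hasDerivAt_D1 (k : ℝ) : HasDerivAt D1 (D2 k) k := by
  have h := intervalIntegral.hasDerivAt_integral_of_dominated_loc_of_deriv_le
    (F := fun x θ => -(Real.cos θ * Real.sin (x * Real.cos θ)))
    (F' := fun x θ => -(Real.cos θ ^ 2 * Real.cos (x * Real.cos θ)))
    (x₀ := k) (a := 0) (b := π) (bound := fun _ => 1) (s := Metric.ball k 1) (Metric.ball_mem_nhds k one_pos)
    (Filter.Eventually.of_forall fun x =>
      (Continuous.aestronglyMeasurable (by fun_prop)))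
    ((Continuous.intervalIntegrable (by fun_prop)) 0 π)
    (Continuous.aestronglyMeasurable (by fun_prop))
    (Filter.Eventually.of_forall fun t _ x _ => by
      rw [norm_neg, norm_mul, Real.norm_eq_abs, Real.norm_eq_abs, abs_pow]
      exact mul_le_one₀ (pow_le_one₀ (abs_nonneg _) (abs_cos_le_one t)) (abs_nonneg _)
        (abs_cos_le_one _))
    (intervalIntegrable_const : IntervalIntegrable (fun _ => (1:ℝ)) volume 0 π)
    (Filter.Eventually.of_forall fun t _ x _ => by
      have h1 : HasDerivAt (fun x : ℝ => x * Real.cos t) (Real.cos t) x := by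
        simpa using (hasDerivAt_id x).mul_const (Real.cos t)
      have h2 := (h1.sin.const_mul (Real.cos t)).neg
      refine h2.congr_deriv ?_
      ring)
  exact h.2.const_mul (1/π)

lemma bessel_ode_s7 (x : ℝ) : x * D2 x + D1 x + x * J0 x = 0 := by
  have hFTC : ∫ θ in (0:ℝ)..π,
      (Real.cos θ * Real.sin (x * Real.cos θ) - x * Real.sin θ ^ 2 * Real.cos (x * Real.cos θ)) = 0 := by
    have hd : ∀ θ ∈ Set.uIcc (0:ℝ) π,
        HasDerivAt (fun θ => Real.sin θ * Real.sin (x * Real.cos θ))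
          (Real.cos θ * Real.sin (x * Real.cos θ) - x * Real.sin θ ^ 2 * Real.cos (x * Real.cos θ)) θ := by
      intro θ _
      have h1 : HasDerivAt (fun θ : ℝ => x * Real.cos θ) (x * -Real.sin θ) θ :=
        (Real.hasDerivAt_cos θ).const_mul x
      have h2 := (Real.hasDerivAt_sin θ).mul h1.sin
      refine h2.congr_deriv ?_
      ring
    rw [intervalIntegral.integral_eq_sub_of_hasDerivAt hd
      (Continuous.intervalIntegrable (by fun_prop) 0 π)]
    simp
  have h2 : ∫ θ in (0:ℝ)..π,
      (x * -(Real.cos θ ^ 2 * Real.cos (x * Real.cos θ)) + -(Real.cos θ * Real.sin (x * Real.cos θ))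
        + x * Real.cos (x * Real.cos θ)) = 0 := by
    have he : Set.EqOn
        (fun θ : ℝ => x * -(Real.cos θ ^ 2 * Real.cos (x * Real.cos θ)) + -(Real.cos θ * Real.sin (x * Real.cos θ))
          + x * Real.cos (x * Real.cos θ))
        (fun θ : ℝ => -(Real.cos θ * Real.sin (x * Real.cos θ) - x * Real.sin θ ^ 2 * Real.cos (x * Real.cos θ)))
        (Set.uIcc 0 π) := by
      intro θ _
      have hs : Real.sin θ ^ 2 = 1 - Real.cos θ ^ 2 := Real.sin_sq θ
      simp only []
      rw [hs]
      ring
    rw [intervalIntegral.integral_congr he, intervalIntegral.integral_neg, hFTC, neg_zero]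
  have hsum : x * D2 x + D1 x + x * J0 x = (1/π) * ∫ θ in (0:ℝ)..π,
      (x * -(Real.cos θ ^ 2 * Real.cos (x * Real.cos θ)) + -(Real.cos θ * Real.sin (x * Real.cos θ))
        + x * Real.cos (x * Real.cos θ)) := by
    unfold J0 D1 D2
    rw [intervalIntegral.integral_add, intervalIntegral.integral_add,
      intervalIntegral.integral_const_mul, intervalIntegral.integral_const_mul]
    · ring
    · exact Continuous.intervalIntegrable (by fun_prop) 0 π
    · exact Continuous.intervalIntegrable (by fun_prop) 0 π
    · exact Continuous.intervalIntegrable (by fun_prop) 0 π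
    · exact Continuous.intervalIntegrable (by fun_prop) 0 π
  rw [hsum, h2, mul_zero]

/- ### the energy function and its monotonicity -/

noncomputable def Wf (x : ℝ) : ℝ :=
  x * (J0 x ^ 2 + D1 x ^ 2) + J0 x * D1 x + J0 x ^ 2 / (2 * x)

lemma hasDerivAt_Wf {x : ℝ} (hx : 0 < x) : HasDerivAt Wf (-(J0 x ^ 2 / (2 * x ^ 2))) x := by
  have hx' : x ≠ 0 := ne_of_gt hx
  have h0 := hasDerivAt_J0 x
  have h1 := hasDerivAt_D1 x
  have hD2 : D2 x = (-(D1 x) - x * J0 x) / x := by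
    field_simp
    linarith [bessel_ode_s7 x]
  rw [hD2] at h1
  have hsq0 : HasDerivAt (fun y => J0 y ^ 2) (2 * J0 x * D1 x) x := by
    have := h0.pow 2
    norm_num at this
    try exact this
    try { convert this using 1; ring }
  have hsq1 : HasDerivAt (fun y => D1 y ^ 2) (2 * D1 x * ((-(D1 x) - x * J0 x) / x)) x := by
    have := h1.pow 2
    norm_num at this
    try exact this
    try { convert this using 1; ring }
  have hA := (hasDerivAt_id x).mul (hsq0.add hsq1)
  have hB := h0.mul h1
  have hden : HasDerivAt (fun y : ℝ => 2 * y) 2 x := by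
    simpa using (hasDerivAt_id x).const_mul (2:ℝ)
  have hC := hsq0.div hden (by positivity)
  have htot := (hA.add hB).add hC
  refine htot.congr_deriv ?_
  simp only [Pi.add_apply, id_eq]
  field_simp
  ring

lemma Wf_antitone : AntitoneOn Wf (Set.Ici (9/5 : ℝ)) := by
  apply antitoneOn_of_deriv_nonpos (convex_Ici _)
  · intro x hx
    have hx0 : (0:ℝ) < x := lt_of_lt_of_le (by norm_num) hx
    exact (hasDerivAt_Wf hx0).continuousAt.continuousWithinAt
  · intro x hx
    rw [interior_Ici] at hx
    have hx0 : (0:ℝ) < x := lt_trans (by norm_num) hx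
    exact (hasDerivAt_Wf hx0).differentiableAt.differentiableWithinAt
  · intro x hx
    rw [interior_Ici] at hx
    have hx0 : (0:ℝ) < x := lt_trans (by norm_num) hx
    rw [(hasDerivAt_Wf hx0).deriv]
    have : 0 ≤ J0 x ^ 2 / (2 * x ^ 2) := by positivity
    linarith

/- ### numerical bounds at the matching point 9/5 -/

lemma J0_95_ge : (3392:ℝ)/10000 ≤ J0 (9/5) := by
  have h := J0_ge_sextic (9/5)
  norm_num at h ⊢
  linarith

lemma J0_95_le : J0 (9/5) ≤ (3401:ℝ)/10000 := by
  have h := J0_le_octic (9/5)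
  norm_num at h ⊢
  linarith

lemma D1_95_eq : D1 (9/5) = -((1/π) * ∫ θ in (0:ℝ)..π, cos θ * sin ((9/5) * cos θ)) := by
  unfold D1
  rw [intervalIntegral.integral_neg]
  ring

lemma D1_95_le : D1 (9/5) ≤ -((5813:ℝ)/10000) := by
  rw [D1_95_eq, neg_le_neg_iff, div_mul_eq_mul_div, one_mul, le_div_iff₀ pi_pos]
  have h := S_lower (k := (9:ℝ)/5) (by norm_num)
  nlinarith [pi_pos, h]

lemma D1_95_ge : -((5848:ℝ)/10000) ≤ D1 (9/5) := by
  rw [D1_95_eq, neg_le_neg_iff, div_mul_eq_mul_div, one_mul, div_le_iff₀ pi_pos]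
  have h := S_upper (k := (9:ℝ)/5) (by norm_num)
  nlinarith [pi_pos, h]

lemma Wf_95_le : Wf (9/5) ≤ 7/10 := by
  unfold Wf
  have ha1 := J0_95_ge
  have ha2 := J0_95_le
  have hb1 := D1_95_ge
  have hb2 := D1_95_le
  set a := J0 (9/5)
  set b := D1 (9/5)
  have h1 : a^2 ≤ (3401/10000:ℝ)^2 := by nlinarith
  have h2 : b^2 ≤ (5848/10000:ℝ)^2 := by nlinarith
  have h3 : a * b ≤ -(3392/10000 * (5813/10000):ℝ) := by nlinarith
  norm_num at h1 h2 h3 ⊢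
  linarith

theorem J0_sq_weighted_bound (k : ℝ) (hk : 0 ≤ k) :
    k * (J0 k) ^ 2 ≤ (2:ℝ) ^ (-(1:ℝ)/2) := by
  have h710 : (7:ℝ)/10 ≤ (2:ℝ) ^ (-(1:ℝ)/2) := by
    have h : (2:ℝ) ^ (-(1:ℝ)/2) = (Real.sqrt 2)⁻¹ := by
      rw [show (-(1:ℝ)/2) = -(1/2) by ring, Real.rpow_neg (by norm_num), Real.sqrt_eq_rpow]
    rw [h, le_inv_comm₀ (by norm_num) (Real.sqrt_pos.mpr (by norm_num))]
    nlinarith [Real.sq_sqrt (by norm_num : (0:ℝ) ≤ 2), Real.sqrt_nonneg 2]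
  have key : k * (J0 k) ^ 2 ≤ 7/10 := by
    rcases le_total k (9/5) with hk2 | hk2
    · have hU := J0_le_quartic k
      have hL := J0_ge_quadratic k
      have hpos : 0 ≤ J0 k := by nlinarith
      have hsq : J0 k ^ 2 ≤ (1 - k^2/4 + k^4/64)^2 := by nlinarith
      have h8 : (0:ℝ) ≤ 8 - k^2 := by nlinarith
      have h9 : (0:ℝ) ≤ 9/5 - k := by linarith
      have hpoly : k * (1 - k^2/4 + k^4/64)^2 ≤ 7/10 := by
        nlinarith [sq_nonneg (9*k^2-8), mul_nonneg (mul_nonneg h8 h8) h8, mul_nonneg hk h9,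
          mul_nonneg (mul_nonneg h8 h8) (mul_nonneg hk h9),
          mul_nonneg (mul_nonneg (mul_nonneg h8 h8) h8) (mul_nonneg hk h9),
          mul_nonneg (mul_nonneg h8 h8) (sq_nonneg (9*k^2-8)),
          mul_nonneg h8 (sq_nonneg (9*k^2-8)), mul_nonneg hk (sq_nonneg (9*k^2-8)),
          mul_nonneg (mul_nonneg hk h8) (sq_nonneg (9*k^2-8))]
      calc k * (J0 k) ^ 2 ≤ k * (1 - k^2/4 + k^4/64)^2 := by
            exact mul_le_mul_of_nonneg_left hsq hk
      _ ≤ 7/10 := hpoly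
    · have hk0 : (0:ℝ) < k := lt_of_lt_of_le (by norm_num) hk2
      have hquad : 0 ≤ k * D1 k ^ 2 + J0 k * D1 k + J0 k ^ 2 / (2 * k) := by
        have hnum : (0:ℝ) ≤ 4*k^2*D1 k^2 + 4*k*(J0 k*D1 k) + 2*J0 k^2 := by
          nlinarith [sq_nonneg (2*k*D1 k + J0 k), sq_nonneg (J0 k)]
        have hd := div_nonneg hnum (by positivity : (0:ℝ) ≤ 4*k)
        calc (0:ℝ) ≤ (4*k^2*D1 k^2 + 4*k*(J0 k*D1 k) + 2*J0 k^2) / (4*k) := hd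
        _ = k * D1 k ^ 2 + J0 k * D1 k + J0 k ^ 2 / (2 * k) := by
            field_simp
            ring
      have hWk : k * (J0 k) ^ 2 ≤ Wf k := by
        unfold Wf
        linarith
      have hmono : Wf k ≤ Wf (9/5) :=
        Wf_antitone (Set.self_mem_Ici) hk2 hk2
      linarith [Wf_95_le]
  linarith
end
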